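/- μ^ζ(Reach) = 1 if and only if μ(N = ∞) = 1. (Theorem 1(2), Markov-chain form: for a fixed strategy, the chance of reaching the target in the augmented MDP M^ζ is 1 if and only if the chance of satisfying the Büchi objective, i.e. taking infinitely many accepting transitions, in the product MDP is 1.) -/

import Mathlib

open MeasureTheory ProbabilityTheory Filter Topology
open scoped ENNReal Classical

/-- The natural σ-algebra on `Option S`: a set is measurable iff its trace on `S` is. -/
instance {S : Type*} [m : MeasurableSpace S] : MeasurableSpace (Option S) := m.map some

/-- Transition probabilities of the `ζ`-absorbed chain on `Option S`: from `some s`, each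
accepting transition `(s, s') ∈ Acc` diverts mass `(1 − ζ) · κ s s'` to the sink `none` and
keeps mass `ζ · κ s s'` on `some s'`; non-accepting transitions are unchanged; the sink
`none` is absorbing. -/
noncomputable def absorbProb {S : Type*} (ζ : ℝ≥0∞) (κ : S → PMF S) (Acc : Set (S × S)) :
    Option S → Option S → ℝ≥0∞
  | none, none => 1
  | none, some _ => 0
  | some s, none => (1 - ζ) * ∑' s' : S, if (s, s') ∈ Acc then κ s s' else 0
  | some s, some s' => if (s, s') ∈ Acc then ζ * κ s s' else κ s s'

/-- `N ω`: the number of accepting transitions along the trajectory `ω`. -/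
noncomputable def numAcc {S : Type*} (Acc : Set (S × S)) (ω : ℕ → S) : ℕ∞ :=
  {i : ℕ | (ω i, ω (i + 1)) ∈ Acc}.encard

/-- `R ω`: the total reward along a trajectory of the absorbed chain, i.e. the number of
accepting transitions taken, including the one leading to the sink `none`, if any. -/
noncomputable def totalReward {S : Type*} (Acc : Set (S × S)) (ω : ℕ → Option S) : ℕ∞ :=
  {i : ℕ | ω (i + 1) = none}.encard +
    {i : ℕ | ∃ s s', ω i = some s ∧ ω (i + 1) = some s' ∧ (s, s') ∈ Acc}.encard

/-- The event of reaching the sink `none`. -/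
def Reach {S : Type*} : Set (ℕ → Option S) := {ω | ∃ i, ω i = none}

/-! ### Auxiliary definitions and lemmas -/

/-- `ζ ^ (number of accepting transitions among the first n steps)`, in product form. -/
noncomputable def accProd {S : Type*} (ζ : ℝ≥0∞) (Acc : Set (S × S)) (n : ℕ) (ω : ℕ → S) :
    ℝ≥0∞ :=
  ∏ i ∈ Finset.range n, (if (ω i, ω (i + 1)) ∈ Acc then ζ else 1)

lemma accProd_eq_pow {S : Type*} (ζ : ℝ≥0∞) (Acc : Set (S × S)) (n : ℕ) (ω : ℕ → S) :
    accProd ζ Acc n ω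
      = ζ ^ ((Finset.range n).filter (fun i => (ω i, ω (i + 1)) ∈ Acc)).card := by
  rw [accProd, ← Finset.prod_filter, Finset.prod_const]

lemma accProd_antitone {S : Type*} {ζ : ℝ≥0∞} (hζ : ζ ≤ 1) (Acc : Set (S × S)) (ω : ℕ → S) :
    Antitone fun n => accProd ζ Acc n ω := by
  apply antitone_nat_of_succ_le
  intro n
  have h : accProd ζ Acc (n + 1) ω
      = accProd ζ Acc n ω * (if (ω n, ω (n + 1)) ∈ Acc then ζ else 1) :=
    Finset.prod_range_succ _ _
  have h1 : (if (ω n, ω (n + 1)) ∈ Acc then ζ else 1) ≤ 1 := by split <;> simp [hζ]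
  calc accProd ζ Acc (n + 1) ω = _ := h
    _ ≤ accProd ζ Acc n ω * 1 := mul_le_mul' le_rfl h1
    _ = accProd ζ Acc n ω := mul_one _

lemma accProd_le_one {S : Type*} {ζ : ℝ≥0∞} (hζ : ζ ≤ 1) (Acc : Set (S × S)) (n : ℕ)
    (ω : ℕ → S) : accProd ζ Acc n ω ≤ 1 := by
  rw [accProd_eq_pow]; exact pow_le_one' hζ _

lemma accProd_measurable {S : Type*} [Fintype S] [MeasurableSpace S]
    [MeasurableSingletonClass S] (ζ : ℝ≥0∞) (Acc : Set (S × S)) (n : ℕ) :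
    Measurable (accProd ζ Acc n) := by
  apply Finset.measurable_prod
  intro i _
  have hm : Measurable fun ω : ℕ → S => (ω i, ω (i + 1)) :=
    (measurable_pi_apply i).prodMk (measurable_pi_apply (i + 1))
  exact Measurable.ite (hm ((Set.toFinite Acc).measurableSet)) measurable_const measurable_const

lemma iInf_accProd_eq_zero_iff {S : Type*} {ζ : ℝ≥0∞} (hζ0 : 0 < ζ) (hζ1 : ζ < 1)
    (Acc : Set (S × S)) (ω : ℕ → S) :
    (⨅ n, accProd ζ Acc n ω) = 0 ↔ numAcc Acc ω = ⊤ := by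
  rw [numAcc, Set.encard_eq_top_iff]
  constructor
  · intro h0
    by_contra hfin
    rw [Set.not_infinite] at hfin
    have hlb : ∀ n, ζ ^ hfin.toFinset.card ≤ accProd ζ Acc n ω := by
      intro n
      rw [accProd_eq_pow]
      apply pow_le_pow_of_le_one (zero_le : 0 ≤ ζ) hζ1.le
      apply Finset.card_le_card
      intro i hi
      simp only [Finset.mem_filter] at hi
      exact hfin.mem_toFinset.mpr hi.2
    have hle : ζ ^ hfin.toFinset.card ≤ 0 := h0 ▸ le_iInf hlb
    exact (pow_ne_zero _ hζ0.ne') (le_antisymm hle zero_le)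
  · intro hinf
    apply le_antisymm _ zero_le
    have hk : ∀ k : ℕ, (⨅ n, accProd ζ Acc n ω) ≤ ζ ^ k := by
      intro k
      obtain ⟨t, hts, htc⟩ := hinf.exists_subset_card_eq k
      refine (iInf_le _ (t.sup id + 1)).trans ?_
      rw [accProd_eq_pow]
      have hsub : t ⊆ (Finset.range (t.sup id + 1)).filter
          (fun i => (ω i, ω (i + 1)) ∈ Acc) := by
        intro i hi
        simp only [Finset.mem_filter, Finset.mem_range]
        exact ⟨Nat.lt_succ_of_le (Finset.le_sup (f := id) hi), hts hi⟩
      calc ζ ^ _ ≤ ζ ^ t.card :=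
            pow_le_pow_of_le_one zero_le hζ1.le (htc ▸ Finset.card_le_card hsub)
        _ = ζ ^ k := by rw [htc]
    have h0 : (⨅ k : ℕ, ζ ^ k) = 0 :=
      tendsto_nhds_unique
        (tendsto_atTop_iInf fun a b hab => pow_le_pow_of_le_one zero_le hζ1.le hab)
        (ENNReal.tendsto_pow_atTop_nhds_zero_of_lt_one hζ1)
    exact h0 ▸ le_iInf hk

lemma measurableSet_option {S : Type*} [Fintype S] [MeasurableSpace S]
    [MeasurableSingletonClass S] (U : Set (Option S)) : MeasurableSet U :=
  (Set.toFinite (some ⁻¹' U)).measurableSet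

/-- `μ^ζ(Reach) = 1` if, and only if, `μ(N = ∞) = 1`: the sink is reached almost surely in
the augmented chain iff the Büchi objective holds almost surely in the original chain. -/
theorem reach_almost_sure_iff_buchi_almost_sure
    {S : Type*} [Fintype S] [Nonempty S] [MeasurableSpace S] [MeasurableSingletonClass S]
    (ζ : ℝ≥0∞) (hζ0 : 0 < ζ) (hζ1 : ζ < 1)
    (κ : S → PMF S) (Acc : Set (S × S)) (s₀ : S)
    (μ : Measure (ℕ → S)) [IsProbabilityMeasure μ]
    (hμ : ∀ (n : ℕ) (f : ℕ → S),
      μ {ω | ∀ i ≤ n, ω i = f i} =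
        (if f 0 = s₀ then 1 else 0) * ∏ i ∈ Finset.range n, κ (f i) (f (i + 1)))
    (μζ : Measure (ℕ → Option S)) [IsProbabilityMeasure μζ]
    (hμζ : ∀ (n : ℕ) (f : ℕ → Option S),
      μζ {ω | ∀ i ≤ n, ω i = f i} =
        (if f 0 = some s₀ then 1 else 0) *
          ∏ i ∈ Finset.range n, absorbProb ζ κ Acc (f i) (f (i + 1))) :
    μζ Reach = 1 ↔ μ {ω | numAcc Acc ω = ⊤} = 1 := by
  classical
  set Alive : ℕ → Set (ℕ → Option S) := fun n => {ω | ∀ i ≤ n, ω i ≠ none} with hAlive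
  -- all subsets of Option S are measurable
  have hmO : ∀ U : Set (Option S), MeasurableSet U := measurableSet_option
  -- measurability of S-cylinders
  have hCylMeas : ∀ (n : ℕ) (f : ℕ → S), MeasurableSet {ω : ℕ → S | ∀ i ≤ n, ω i = f i} := by
    intro n f
    have : {ω : ℕ → S | ∀ i ≤ n, ω i = f i}
        = ⋂ i ∈ Set.Iic n, (fun ω : ℕ → S => ω i) ⁻¹' {f i} := by
      ext ω; simp [Set.mem_iInter]
    rw [this]
    exact MeasurableSet.biInter (Set.to_countable _)
      fun i _ => measurable_pi_apply i ((Set.toFinite _).measurableSet)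
  have hCylMeasO : ∀ (n : ℕ) (f : ℕ → Option S),
      MeasurableSet {ω : ℕ → Option S | ∀ i ≤ n, ω i = f i} := by
    intro n f
    have : {ω : ℕ → Option S | ∀ i ≤ n, ω i = f i}
        = ⋂ i ∈ Set.Iic n, (fun ω : ℕ → Option S => ω i) ⁻¹' {f i} := by
      ext ω; simp [Set.mem_iInter]
    rw [this]
    exact MeasurableSet.biInter (Set.to_countable _)
      fun i _ => measurable_pi_apply i (hmO _)
  have hAliveMeas : ∀ n, MeasurableSet (Alive n) := by
    intro n
    have : Alive n = ⋂ i ∈ Set.Iic n, (fun ω : ℕ → Option S => ω i) ⁻¹' {none}ᶜ := by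
      ext ω; simp [hAlive, Set.mem_iInter]
    rw [this]
    exact MeasurableSet.biInter (Set.to_countable _)
      fun i _ => measurable_pi_apply i (hmO _)
  -- the key identity: μζ (Alive n) = ∫⁻ accProd ζ Acc n dμ
  have key : ∀ n, μζ (Alive n) = ∫⁻ ω, accProd ζ Acc n ω ∂μ := by
    intro n
    set E : (Fin (n + 1) → S) → ℕ → S :=
      fun g i => g ⟨min i n, Nat.lt_succ_of_le (min_le_right i n)⟩ with hEdef
    have hE : ∀ (g : Fin (n + 1) → S) (i : ℕ) (hi : i ≤ n),
        E g i = g ⟨i, Nat.lt_succ_of_le hi⟩ := by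
      intro g i hi
      simp only [hEdef]
      congr 1
      exact Fin.ext (Nat.min_eq_left hi)
    set C : (Fin (n + 1) → S) → Set (ℕ → S) :=
      fun g => {ω | ∀ i ≤ n, ω i = E g i} with hCdef
    set D : (Fin (n + 1) → S) → Set (ℕ → Option S) :=
      fun g => {ω | ∀ i ≤ n, ω i = some (E g i)} with hDdef
    have hC_forces : ∀ (g : Fin (n + 1) → S) (ω : ℕ → S),
        ω ∈ C g → g = fun j : Fin (n + 1) => ω j := by
      intro g ω h
      funext j
      have h1 := h j (Fin.is_le j)
      rw [hE g j (Fin.is_le j)] at h1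
      rw [← h1]
    have hD_inj : ∀ (g g' : Fin (n + 1) → S) (ω : ℕ → Option S),
        ω ∈ D g → ω ∈ D g' → g = g' := by
      intro g g' ω h1 h2
      funext j
      have e1 := h1 j (Fin.is_le j)
      have e2 := h2 j (Fin.is_le j)
      rw [hE g j (Fin.is_le j)] at e1
      rw [hE g' j (Fin.is_le j)] at e2
      have : some (g ⟨j, Nat.lt_succ_of_le (Fin.is_le j)⟩)
          = some (g' ⟨j, Nat.lt_succ_of_le (Fin.is_le j)⟩) := by rw [← e1, ← e2]
      have h3 := Option.some_injective _ this
      simpa using h3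
    -- value of μζ on the cylinder D g
    have hDval : ∀ g : Fin (n + 1) → S,
        μζ (D g) = μ (C g) * accProd ζ Acc n (E g) := by
      intro g
      have h := hμζ n (fun i => some (E g i))
      have h2 : μζ (D g) = (if E g 0 = s₀ then 1 else 0) *
          ∏ i ∈ Finset.range n,
            (if (E g i, E g (i + 1)) ∈ Acc then ζ * κ (E g i) (E g (i + 1))
              else κ (E g i) (E g (i + 1))) := by
        rw [hDdef]
        simpa [absorbProb] using h
      have hsplit : ∏ i ∈ Finset.range n,
          (if (E g i, E g (i + 1)) ∈ Acc then ζ * κ (E g i) (E g (i + 1))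
            else κ (E g i) (E g (i + 1)))
          = (∏ i ∈ Finset.range n, κ (E g i) (E g (i + 1))) * accProd ζ Acc n (E g) := by
        rw [accProd, ← Finset.prod_mul_distrib]
        apply Finset.prod_congr rfl
        intro i _
        split <;> simp [mul_comm]
      rw [h2, hsplit, ← mul_assoc, ← hμ n (E g)]
    -- the LHS as a finite sum
    have hcover : Alive n = ⋃ g ∈ (Finset.univ : Finset (Fin (n + 1) → S)), D g := by
      ext ω
      simp only [Set.mem_iUnion, Finset.mem_univ, exists_true_left, hAlive, Set.mem_setOf_eq,
        exists_prop, true_and]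
      constructor
      · intro h
        set d : S := Classical.arbitrary S
        refine ⟨fun j : Fin (n + 1) => (ω j).getD d, ?_⟩
        intro i hi
        rw [hE (fun j : Fin (n + 1) => (ω j).getD d) i hi]
        have hne := h i hi
        cases hωi : ω i with
        | none => exact absurd hωi hne
        | some a => simp [hωi]
      · rintro ⟨g, hg⟩ i hi
        rw [hg i hi]
        simp
    have hdisj : (↑(Finset.univ : Finset (Fin (n + 1) → S)) :
        Set (Fin (n + 1) → S)).PairwiseDisjoint D := by
      intro g _ g' _ hne
      rw [Function.onFun, Set.disjoint_left]
      intro ω h1 h2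
      exact hne (hD_inj g g' ω h1 h2)
    have hLHS : μζ (Alive n) = ∑ g : Fin (n + 1) → S, μζ (D g) := by
      rw [hcover, measure_biUnion_finset hdisj fun g _ => hCylMeasO n _]
    -- the RHS as the same finite sum
    have hpt : ∀ ω : ℕ → S, accProd ζ Acc n ω
        = ∑ g : Fin (n + 1) → S,
            (C g).indicator (fun _ => accProd ζ Acc n (E g)) ω := by
      intro ω
      rw [Finset.sum_eq_single_of_mem (fun j : Fin (n + 1) => ω j) (Finset.mem_univ _) ?_]
      · have hmem : ω ∈ C (fun j : Fin (n + 1) => ω j) := by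
          intro i hi
          rw [hE (fun j : Fin (n + 1) => ω j) i hi]
        rw [Set.indicator_of_mem hmem]
        apply Finset.prod_congr rfl
        intro i hi
        have hi' : i < n := Finset.mem_range.mp hi
        rw [hE (fun j : Fin (n + 1) => ω j) i hi'.le, hE (fun j : Fin (n + 1) => ω j) (i + 1) hi']
      · intro g _ hne
        apply Set.indicator_of_notMem
        intro hmemg
        exact hne (hC_forces g ω hmemg)
    have hRHS : ∫⁻ ω, accProd ζ Acc n ω ∂μ
        = ∑ g : Fin (n + 1) → S, accProd ζ Acc n (E g) * μ (C g) := by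
      rw [lintegral_congr hpt,
        lintegral_finset_sum _ fun g _ => measurable_const.indicator (hCylMeas n _)]
      exact Finset.sum_congr rfl fun g _ => lintegral_indicator_const (hCylMeas n _) _
    rw [hLHS, hRHS]
    exact Finset.sum_congr rfl fun g _ => by rw [hDval g, mul_comm]
  -- limits
  set G : (ℕ → S) → ℝ≥0∞ := fun ω => ⨅ n, accProd ζ Acc n ω with hGdef
  have hGmeas : Measurable G := Measurable.iInf fun n => accProd_measurable ζ Acc n
  have hptG : ∀ ω, Tendsto (fun n => accProd ζ Acc n ω) atTop (𝓝 (G ω)) :=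
    fun ω => tendsto_atTop_iInf (accProd_antitone hζ1.le Acc ω)
  have htend2 : Tendsto (fun n => ∫⁻ ω, accProd ζ Acc n ω ∂μ) atTop (𝓝 (∫⁻ ω, G ω ∂μ)) := by
    apply tendsto_lintegral_of_dominated_convergence (fun _ => 1)
      (fun n => accProd_measurable ζ Acc n)
      (fun n => Eventually.of_forall fun ω => accProd_le_one hζ1.le Acc n ω)
      (by simp)
      (Eventually.of_forall hptG)
  have hanti : Antitone Alive := by
    intro a b hab ω hω i hi
    exact hω i (hi.trans hab)
  have hIab : ⋂ n, Alive n = (Reach (S := S))ᶜ := by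
    ext ω
    simp only [Set.mem_iInter, hAlive, Set.mem_setOf_eq, Set.mem_compl_iff, Reach]
    constructor
    · intro h ⟨i, hi⟩
      exact h i i le_rfl hi
    · intro h n i _
      exact fun hi => h ⟨i, hi⟩
  have htend1 : Tendsto (fun n => μζ (Alive n)) atTop (𝓝 (μζ (Reach (S := S))ᶜ)) := by
    have := tendsto_measure_iInter_atTop (μ := μζ) (s := Alive)
      (fun n => (hAliveMeas n).nullMeasurableSet) hanti ⟨0, measure_ne_top _ _⟩
    rw [hIab] at this
    exact this
  have hRc : μζ (Reach (S := S))ᶜ = ∫⁻ ω, G ω ∂μ := by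
    refine tendsto_nhds_unique htend1 ?_
    have : (fun n => μζ (Alive n)) = fun n => ∫⁻ ω, accProd ζ Acc n ω ∂μ := funext key
    rw [this]
    exact htend2
  have hReachMeas : MeasurableSet (Reach (S := S)) := by
    have : Reach (S := S) = ⋃ i, (fun ω : ℕ → Option S => ω i) ⁻¹' {none} := by
      ext ω; simp [Reach]
    rw [this]
    exact MeasurableSet.iUnion fun i => measurable_pi_apply i (hmO _)
  -- putting it together
  have hsetEq : {ω : ℕ → S | numAcc Acc ω = ⊤} = {ω | G ω = 0} := by
    ext ω
    simp only [Set.mem_setOf_eq]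
    exact (iInf_accProd_eq_zero_iff hζ0 hζ1 Acc ω).symm
  have hG0meas : MeasurableSet {ω : ℕ → S | G ω = 0} :=
    hGmeas (measurableSet_singleton 0)
  rw [← prob_compl_eq_zero_iff hReachMeas, hRc, lintegral_eq_zero_iff hGmeas, hsetEq,
    ← prob_compl_eq_zero_iff hG0meas]
  have hcs : {a : ℕ → S | ¬ G a = (0 : (ℕ → S) → ℝ≥0∞) a} = {ω : ℕ → S | G ω = 0}ᶜ := by
    ext a; simp
  rw [Filter.EventuallyEq, ae_iff, hcs]
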